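/- Let (Ω, μ) be a measure space, p a natural number, N > 0, and A : Ω → ℝ a nonnegative measurable function with 0 < ∫_Ω A^{1/(p+2)} dμ < ∞. Define d*(x) = N · A(x)^{1/(p+2)} / ∫_Ω A^{1/(p+2)} dμ. Then ∫_Ω d* dμ = N, and for every measurable d : Ω → ℝ with d > 0 a.e. and ∫_Ω d dμ = N, one has ∫_Ω A · d^{−(p+1)} dμ ≥ ∫_Ω A · (d*)^{−(p+1)} dμ (where the integrand is interpreted as 0 where A = 0). -/

import Mathlib

open MeasureTheory

/-- The optimal mesh density `d*(x) = N·A(x)^{1/(p+2)} / ∫ A^{1/(p+2)} dμ` has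
complexity `∫ d* dμ = N`, and it minimizes the continuous error estimate
`∫ A · d^{−(p+1)} dμ` among all positive densities of complexity `N`. -/
theorem optimal_density_complexity_and_minimality
    {Ω : Type*} [MeasurableSpace Ω] (μ : Measure Ω) (p : ℕ) (N : ℝ) (hN : 0 < N)
    (A : Ω → ℝ) (hAmeas : Measurable A) (hAnonneg : ∀ x, 0 ≤ A x)
    (hInt : Integrable (fun x => A x ^ (1 / (p + 2 : ℝ))) μ)
    (hIpos : 0 < ∫ x, A x ^ (1 / (p + 2 : ℝ)) ∂μ)
    (dstar : Ω → ℝ)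
    (hdstar : ∀ x, dstar x =
      N * A x ^ (1 / (p + 2 : ℝ)) / ∫ y, A y ^ (1 / (p + 2 : ℝ)) ∂μ) :
    (∫ x, dstar x ∂μ = N) ∧
      ∀ d : Ω → ℝ, Measurable d → (∀ᵐ x ∂μ, 0 < d x) → (∫ x, d x ∂μ = N) →
        ∫⁻ x, ENNReal.ofReal (A x * dstar x ^ (-(p + 1 : ℝ))) ∂μ ≤
          ∫⁻ x, ENNReal.ofReal (A x * d x ^ (-(p + 1 : ℝ))) ∂μ := by
  have hp2 : (0:ℝ) < (p:ℝ) + 2 := by positivity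
  have hp2ne : ((p:ℝ) + 2) ≠ 0 := hp2.ne'
  have hp1 : (0:ℝ) < (p:ℝ) + 1 := by positivity
  set c : ℝ := 1 / ((p:ℝ) + 2) with hc
  set I : ℝ := ∫ x, A x ^ c ∂μ with hIdef
  have hc0 : 0 < c := by positivity
  have hIne : I ≠ 0 := ne_of_gt hIpos
  have hdstar' : ∀ x, dstar x = (N / I) * A x ^ c := by
    intro x; rw [hdstar x]; ring
  have hcomp : ∫ x, dstar x ∂μ = N := by
    calc ∫ x, dstar x ∂μ = ∫ x, (N / I) * A x ^ c ∂μ := by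
          exact integral_congr_ae (Filter.Eventually.of_forall fun x => hdstar' x)
      _ = (N / I) * I := by rw [integral_const_mul]
      _ = N := by field_simp
  refine ⟨hcomp, ?_⟩
  intro d hd hdpos hdN
  have hK : (0:ℝ) ≤ (I / N) ^ ((p:ℝ) + 1) := by positivity
  -- pointwise formula for the optimal integrand
  have hpt : ∀ x, A x * dstar x ^ (-((p:ℝ) + 1)) = (I / N) ^ ((p:ℝ) + 1) * A x ^ c := by
    intro x
    rcases (hAnonneg x).eq_or_lt with h0 | hA
    · rw [← h0]; simp [Real.zero_rpow (ne_of_gt hc0)]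
    · have hNI : 0 < N / I := div_pos hN hIpos
      have e1 : (N / I * A x ^ c) ^ (-((p:ℝ)+1))
          = (N / I) ^ (-((p:ℝ)+1)) * (A x ^ c) ^ (-((p:ℝ)+1)) :=
        Real.mul_rpow hNI.le (Real.rpow_nonneg hA.le c)
      have e2 : (A x ^ c) ^ (-((p:ℝ)+1)) = A x ^ (c * -((p:ℝ)+1)) :=
        (Real.rpow_mul hA.le _ _).symm
      have e3 : (N / I) ^ (-((p:ℝ)+1)) = (I / N) ^ ((p:ℝ)+1) := by
        rw [Real.rpow_neg hNI.le, ← Real.inv_rpow hNI.le, inv_div]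
      have hexp : 1 + c * -((p:ℝ)+1) = c := by rw [hc]; field_simp; ring
      have e4 : A x * A x ^ (c * -((p:ℝ)+1)) = A x ^ c := by
        rw [← Real.rpow_one_add' hA.le (by rw [hexp]; exact hc0.ne'), hexp]
      calc A x * dstar x ^ (-((p:ℝ)+1))
          = (I/N) ^ ((p:ℝ)+1) * (A x * A x ^ (c * -((p:ℝ)+1))) := by
            rw [hdstar' x, e1, e2, e3]; ring
        _ = (I/N) ^ ((p:ℝ)+1) * A x ^ c := by rw [e4]
  -- value of the LHS lintegral
  have hAc_nonneg : ∀ x, 0 ≤ A x ^ c := fun x => Real.rpow_nonneg (hAnonneg x) c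
  have hLHS : ∫⁻ x, ENNReal.ofReal (A x * dstar x ^ (-((p:ℝ) + 1))) ∂μ
      = ENNReal.ofReal ((I/N) ^ ((p:ℝ)+1)) * ENNReal.ofReal I := by
    have h1 : ∀ x, ENNReal.ofReal (A x * dstar x ^ (-((p:ℝ)+1)))
        = ENNReal.ofReal ((I/N) ^ ((p:ℝ)+1)) * ENNReal.ofReal (A x ^ c) := by
      intro x; rw [hpt x, ENNReal.ofReal_mul hK]
    simp only [h1]
    rw [lintegral_const_mul' _ _ ENNReal.ofReal_ne_top]
    congr 1
    rw [← ofReal_integral_eq_lintegral_ofReal hInt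
      (Filter.Eventually.of_forall hAc_nonneg)]
  -- d is integrable and its lintegral is N
  have hdint : Integrable d μ := by
    by_contra h
    rw [integral_undef h] at hdN
    exact hN.ne' hdN.symm
  have hdlint : ∫⁻ x, ENNReal.ofReal (d x) ∂μ = ENNReal.ofReal N := by
    rw [← ofReal_integral_eq_lintegral_ofReal hdint (hdpos.mono fun x hx => hx.le), hdN]
  set T := ∫⁻ x, ENNReal.ofReal (A x * d x ^ (-((p:ℝ)+1))) ∂μ with hT
  -- Hölder
  have hconj : ((p:ℝ)+2).HolderConjugate (((p:ℝ)+2)/((p:ℝ)+1)) := by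
    exact (Real.holderConjugate_iff_eq_conjExponent (by linarith)).2 (by congr 1; ring)
  have hFmeas : Measurable fun x => ENNReal.ofReal (A x * d x ^ (-((p:ℝ)+1))) :=
    (hAmeas.mul (hd.pow measurable_const)).ennreal_ofReal
  have hfmeas : Measurable fun x =>
      (ENNReal.ofReal (A x * d x ^ (-((p:ℝ)+1)))) ^ c :=
    hFmeas.pow measurable_const
  have hgmeas : Measurable fun x =>
      (ENNReal.ofReal (d x)) ^ (((p:ℝ)+1)/((p:ℝ)+2)) :=
    hd.ennreal_ofReal.pow measurable_const
  have hH := ENNReal.lintegral_mul_le_Lp_mul_Lq μ hconj hfmeas.aemeasurable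
    hgmeas.aemeasurable
  -- identify the three integrals in Hölder
  have hfg : ∀ᵐ x ∂μ, (ENNReal.ofReal (A x * d x ^ (-((p:ℝ)+1)))) ^ c *
      (ENNReal.ofReal (d x)) ^ (((p:ℝ)+1)/((p:ℝ)+2)) = ENNReal.ofReal (A x ^ c) := by
    filter_upwards [hdpos] with x hx
    have hdne : ENNReal.ofReal (d x) ≠ 0 := by
      simp [ENNReal.ofReal_eq_zero, not_le, hx]
    have e1 : ENNReal.ofReal (A x * d x ^ (-((p:ℝ)+1)))
        = ENNReal.ofReal (A x) * (ENNReal.ofReal (d x)) ^ (-((p:ℝ)+1)) := by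
      rw [ENNReal.ofReal_mul (hAnonneg x), ENNReal.ofReal_rpow_of_pos hx]
    rw [e1, ENNReal.mul_rpow_of_nonneg _ _ hc0.le, ← ENNReal.rpow_mul, mul_assoc,
      ← ENNReal.rpow_add _ _ hdne ENNReal.ofReal_ne_top]
    have he : -((p:ℝ)+1) * c + ((p:ℝ)+1)/((p:ℝ)+2) = 0 := by
      rw [hc]; field_simp; ring
    rw [he, ENNReal.rpow_zero, mul_one, ← ENNReal.ofReal_rpow_of_nonneg (hAnonneg x) hc0.le]
  have hint1 : ∫⁻ x, (ENNReal.ofReal (A x * d x ^ (-((p:ℝ)+1)))) ^ c *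
      (ENNReal.ofReal (d x)) ^ (((p:ℝ)+1)/((p:ℝ)+2)) ∂μ = ENNReal.ofReal I := by
    rw [lintegral_congr_ae hfg,
      ← ofReal_integral_eq_lintegral_ofReal hInt (Filter.Eventually.of_forall hAc_nonneg)]
  have hint2 : ∫⁻ x, ((ENNReal.ofReal (A x * d x ^ (-((p:ℝ)+1)))) ^ c) ^ ((p:ℝ)+2) ∂μ = T := by
    apply lintegral_congr fun x => ?_
    rw [← ENNReal.rpow_mul]
    have hm : c * ((p:ℝ)+2) = 1 := by rw [hc]; field_simp
    rw [hm, ENNReal.rpow_one]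
  have hint3 : ∫⁻ x, ((ENNReal.ofReal (d x)) ^ (((p:ℝ)+1)/((p:ℝ)+2))) ^ (((p:ℝ)+2)/((p:ℝ)+1)) ∂μ
      = ENNReal.ofReal N := by
    rw [← hdlint]
    apply lintegral_congr fun x => ?_
    rw [← ENNReal.rpow_mul]
    have : ((p:ℝ)+1)/((p:ℝ)+2) * (((p:ℝ)+2)/((p:ℝ)+1)) = 1 := by field_simp
    rw [this, ENNReal.rpow_one]
  have hH' : ENNReal.ofReal I ≤ T ^ c * (ENNReal.ofReal N) ^ (((p:ℝ)+1)/((p:ℝ)+2)) := by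
    have h1q : 1 / (((p:ℝ)+2)/((p:ℝ)+1)) = ((p:ℝ)+1)/((p:ℝ)+2) := one_div_div _ _
    calc ENNReal.ofReal I
        = ∫⁻ x, ((fun x => (ENNReal.ofReal (A x * d x ^ (-((p:ℝ)+1)))) ^ c) *
            (fun x => (ENNReal.ofReal (d x)) ^ (((p:ℝ)+1)/((p:ℝ)+2)))) x ∂μ := by
          rw [← hint1]; rfl
      _ ≤ _ := hH
      _ = T ^ c * (ENNReal.ofReal N) ^ (((p:ℝ)+1)/((p:ℝ)+2)) := by
          rw [hint2, hint3, h1q, hc]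
  have hNb0 : (ENNReal.ofReal N) ^ ((p:ℝ)+1) ≠ 0 := by
    simp [ENNReal.rpow_eq_zero_iff, ENNReal.ofReal_eq_zero, not_le, hN, hN.not_gt]
  have hNbtop : (ENNReal.ofReal N) ^ ((p:ℝ)+1) ≠ ⊤ :=
    ENNReal.rpow_ne_top_of_nonneg hp1.le ENNReal.ofReal_ne_top
  have h5 : (ENNReal.ofReal I) ^ ((p:ℝ)+2) ≤ T * (ENNReal.ofReal N) ^ ((p:ℝ)+1) := by
    calc (ENNReal.ofReal I) ^ ((p:ℝ)+2)
        ≤ (T ^ c * (ENNReal.ofReal N) ^ (((p:ℝ)+1)/((p:ℝ)+2))) ^ ((p:ℝ)+2) :=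
          ENNReal.rpow_le_rpow hH' hp2.le
      _ = T * (ENNReal.ofReal N) ^ ((p:ℝ)+1) := by
          rw [ENNReal.mul_rpow_of_nonneg _ _ hp2.le, ← ENNReal.rpow_mul, ← ENNReal.rpow_mul]
          have e1 : c * ((p:ℝ)+2) = 1 := by rw [hc]; field_simp
          have e2 : ((p:ℝ)+1)/((p:ℝ)+2) * ((p:ℝ)+2) = (p:ℝ)+1 := by field_simp
          rw [e1, e2, ENNReal.rpow_one]
  rw [hLHS]
  have hLeq : ENNReal.ofReal ((I/N) ^ ((p:ℝ)+1)) * ENNReal.ofReal I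
      = (ENNReal.ofReal I) ^ ((p:ℝ)+2) / (ENNReal.ofReal N) ^ ((p:ℝ)+1) := by
    rw [← ENNReal.ofReal_rpow_of_pos (div_pos hIpos hN), ENNReal.ofReal_div_of_pos hN,
      ENNReal.div_rpow_of_nonneg _ _ hp1.le, div_eq_mul_inv, mul_right_comm, ← div_eq_mul_inv]
    congr 1
    calc (ENNReal.ofReal I) ^ ((p:ℝ)+1) * ENNReal.ofReal I
        = (ENNReal.ofReal I) ^ ((p:ℝ)+1) * (ENNReal.ofReal I) ^ (1:ℝ) := by
          rw [ENNReal.rpow_one]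
      _ = (ENNReal.ofReal I) ^ (((p:ℝ)+1)+1) :=
          (ENNReal.rpow_add_of_nonneg _ _ hp1.le zero_le_one).symm
      _ = (ENNReal.ofReal I) ^ ((p:ℝ)+2) := by norm_num [add_assoc]
  rw [hLeq]
  exact (ENNReal.div_le_iff_le_mul (Or.inl hNb0) (Or.inl hNbtop)).2 h5
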